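/- arXiv:1505.06411 — 4 statements merged into one kernel-verified Lean document; each statement's English description precedes it below -/
import Mathlib

section
/- Let p be a prime with p ≡ 3 (mod 4), p ≠ 3. If m is a Markoff number then 3m ≢ ±2 (mod p). -/
def IsMarkoffNumber (m : ℤ) : Prop :=
  ∃ x₁ x₂ x₃ : ℤ, 0 < x₁ ∧ 0 < x₂ ∧ 0 < x₃ ∧
    x₁ ^ 2 + x₂ ^ 2 + x₃ ^ 2 = 3 * x₁ * x₂ * x₃ ∧
    (m = x₁ ∨ m = x₂ ∨ m = x₃)

lemma markoff_sq_add_sq_eq_zero {p : ℕ} [Fact p.Prime] (hp4 : p % 4 = 3)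
    (a b : ZMod p) (h : a ^ 2 + b ^ 2 = 0) : a = 0 ∧ b = 0 := by
  have hb : b = 0 := by
    by_contra hb
    have hsq : ((a / b) ^ 2 : ZMod p) = -1 := by
      field_simp
      linear_combination h
    have : IsSquare (-1 : ZMod p) := ⟨a / b, by rw [← hsq]; ring⟩
    rw [ZMod.exists_sq_eq_neg_one_iff] at this
    exact this hp4
  subst hb
  simp only [ne_eq, OfNat.ofNat_ne_zero, not_false_eq_true, zero_pow, add_zero,
    pow_eq_zero_iff] at h
  exact ⟨h, rfl⟩

lemma markoff_key {p : ℕ} [Fact p.Prime] (hp4 : p % 4 = 3) (a b c e : ZMod p)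
    (he : e = 1 ∨ e = -1)
    (h : a ^ 2 + b ^ 2 + c ^ 2 = 3 * a * b * c) (h3 : 3 * c = e * 2) : False := by
  have he2 : e ^ 2 = 1 := by rcases he with rfl | rfl <;> ring
  have hsq : (a - e * b) ^ 2 + c ^ 2 = 0 := by
    linear_combination h + a * b * h3 + b ^ 2 * he2
  have hc : c = 0 := (markoff_sq_add_sq_eq_zero hp4 _ _ hsq).2
  have h2 : (2 : ZMod p) = 0 := by
    rcases he with rfl | rfl
    · linear_combination -h3 + 3 * hc
    · linear_combination h3 - 3 * hc
  have hp2 : (p : ℕ).Prime := Fact.out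
  have : p ∣ 2 := by
    have : ((2 : ℕ) : ZMod p) = 0 := by exact_mod_cast h2
    exact (ZMod.natCast_eq_zero_iff 2 p).mp this
  have := Nat.le_of_dvd (by norm_num) this
  omega

theorem markoff_number_not_pm_two_thirds_mod_p (p : ℕ) [Fact p.Prime]
    (hp4 : p % 4 = 3) (hp3 : p ≠ 3) (m : ℤ) (hm : IsMarkoffNumber m) :
    (3 * m : ZMod p) ≠ 2 ∧ (3 * m : ZMod p) ≠ -2 := by
  obtain ⟨x₁, x₂, x₃, _, _, _, heq, hmx⟩ := hm
  have hz : ((x₁ : ZMod p)) ^ 2 + (x₂ : ZMod p) ^ 2 + (x₃ : ZMod p) ^ 2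
      = 3 * (x₁ : ZMod p) * (x₂ : ZMod p) * (x₃ : ZMod p) := by
    have := congrArg (fun z : ℤ => (z : ZMod p)) heq
    push_cast at this
    linear_combination this
  constructor <;> intro hcon
  · rcases hmx with rfl | rfl | rfl
    · exact markoff_key hp4 (x₂ : ZMod p) (x₃ : ZMod p) (m : ZMod p) 1 (Or.inl rfl)
        (by linear_combination hz) (by push_cast at hcon ⊢; linear_combination hcon)
    · exact markoff_key hp4 (x₁ : ZMod p) (x₃ : ZMod p) (m : ZMod p) 1 (Or.inl rfl)
        (by linear_combination hz) (by push_cast at hcon ⊢; linear_combination hcon)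
    · exact markoff_key hp4 (x₁ : ZMod p) (x₂ : ZMod p) (m : ZMod p) 1 (Or.inl rfl)
        (by linear_combination hz) (by push_cast at hcon ⊢; linear_combination hcon)
  · rcases hmx with rfl | rfl | rfl
    · exact markoff_key hp4 (x₂ : ZMod p) (x₃ : ZMod p) (m : ZMod p) (-1) (Or.inr rfl)
        (by linear_combination hz) (by push_cast at hcon ⊢; linear_combination hcon)
    · exact markoff_key hp4 (x₁ : ZMod p) (x₃ : ZMod p) (m : ZMod p) (-1) (Or.inr rfl)
        (by linear_combination hz) (by push_cast at hcon ⊢; linear_combination hcon)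
    · exact markoff_key hp4 (x₁ : ZMod p) (x₂ : ZMod p) (m : ZMod p) (-1) (Or.inr rfl)
        (by linear_combination hz) (by push_cast at hcon ⊢; linear_combination hcon)
end

section
/- If a₁, a₂, a₃ are real numbers with |aⱼ| ≤ 2 for all j and a₁² + a₂² + a₃² = a₁a₂a₃, then a₁ = a₂ = a₃ = 0. -/
theorem markoff_type_trivial_in_box (a₁ a₂ a₃ : ℝ)
    (h₁ : |a₁| ≤ 2) (h₂ : |a₂| ≤ 2) (h₃ : |a₃| ≤ 2)
    (h : a₁ ^ 2 + a₂ ^ 2 + a₃ ^ 2 = a₁ * a₂ * a₃) :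
    a₁ = 0 ∧ a₂ = 0 ∧ a₃ = 0 := by
  rw [abs_le] at h₁ h₂ h₃
  have k1 : (2 - a₁) * (a₂ + a₃) ^ 2 ≥ 0 :=
    mul_nonneg (by linarith [h₁.2]) (sq_nonneg _)
  have k2 : (2 + a₁) * (a₂ - a₃) ^ 2 ≥ 0 :=
    mul_nonneg (by linarith [h₁.1]) (sq_nonneg _)
  have ha1 : a₁ = 0 := by nlinarith [sq_nonneg a₁]
  subst ha1
  have ha2 : a₂ = 0 := by nlinarith [sq_nonneg a₂, sq_nonneg a₃]
  have ha3 : a₃ = 0 := by nlinarith [sq_nonneg a₂, sq_nonneg a₃]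
  exact ⟨rfl, ha2, ha3⟩
end

section
/- Every Markoff triple can be reduced to (1,1,1) by finitely many applications of coordinate permutations and the Vieta involutions Rⱼ; equivalently, the group Γ generated by coordinate permutations and R₁, R₂, R₃ acts transitively on the set of Markoff triples. -/
/-- One move of the Markoff group: a Vieta involution or a coordinate
permutation. -/
def MarkoffMove (x y : ℤ × ℤ × ℤ) : Prop :=
  y = (x.1, x.2.1, 3 * x.1 * x.2.1 - x.2.2) ∨
  y = (x.1, 3 * x.1 * x.2.2 - x.2.1, x.2.2) ∨
  y = (3 * x.2.1 * x.2.2 - x.1, x.2.1, x.2.2) ∨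
  y = (x.1, x.2.2, x.2.1) ∨
  y = (x.2.1, x.1, x.2.2) ∨
  y = (x.2.1, x.2.2, x.1) ∨
  y = (x.2.2, x.1, x.2.1) ∨
  y = (x.2.2, x.2.1, x.1)

private lemma markoff_key_s15 : ∀ n : ℕ, ∀ a b c : ℤ, a + b + c ≤ (n : ℤ) → 0 < a → a ≤ b → b ≤ c →
    a ^ 2 + b ^ 2 + c ^ 2 = 3 * a * b * c →
    Relation.ReflTransGen MarkoffMove (a, b, c) (1, 1, 1) := by
  intro n
  induction n with
  | zero =>
    intro a b c hs ha hab hbc h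
    exfalso; push_cast at hs; linarith
  | succ n ih =>
    intro a b c hs ha hab hbc h
    by_cases hc : c ≤ 1
    · have ha1 : a = 1 := by omega
      have hb1 : b = 1 := by omega
      have hc1 : c = 1 := by omega
      subst ha1 hb1 hc1
      exact Relation.ReflTransGen.refl
    · push_neg at hc
      have hbc' : b < c := by
        rcases lt_or_eq_of_le hbc with h' | h'
        · exact h'
        · exfalso; subst h'
          nlinarith [mul_pos ha ha, sq_nonneg (b - a), mul_nonneg (mul_nonneg (by linarith : (0:ℤ) ≤ a - 1) (by linarith : (0:ℤ) ≤ b)) (by linarith : (0:ℤ) ≤ b)]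
      have hdb : 3 * a * b - c ≤ b := by
        nlinarith [mul_nonneg (mul_nonneg (by linarith : (0:ℤ) ≤ a - 1) (by linarith : (0:ℤ) ≤ b)) (by linarith : (0:ℤ) ≤ b), sq_nonneg (b - a), mul_pos ha ha]
      have hd0 : 0 < 3 * a * b - c := by
        nlinarith [mul_pos ha ha, mul_pos (lt_of_lt_of_le ha hab) (lt_of_lt_of_le ha hab)]
      have hm1 : MarkoffMove (a, b, c) (a, b, 3 * a * b - c) := Or.inl rfl
      have hMd : a ^ 2 + b ^ 2 + (3 * a * b - c) ^ 2 = 3 * a * b * (3 * a * b - c) := by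
        linear_combination h
      have hsum : a + b + (3 * a * b - c) ≤ (n : ℤ) := by
        push_cast at hs; linarith
      rcases le_total a (3 * a * b - c) with had | had
      · refine Relation.ReflTransGen.head hm1 (Relation.ReflTransGen.head ?_ (ih a (3 * a * b - c) b (by linarith) ha had hdb (by linear_combination hMd)))
        right; right; right; left; rfl
      · refine Relation.ReflTransGen.head hm1 (Relation.ReflTransGen.head ?_ (ih (3 * a * b - c) a b (by linarith) hd0 had hab (by linear_combination hMd)))
        right; right; right; right; right; right; left; rfl

theorem markoff_descent_to_one (x : ℤ × ℤ × ℤ)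
    (hpos : 0 < x.1 ∧ 0 < x.2.1 ∧ 0 < x.2.2)
    (h : x.1 ^ 2 + x.2.1 ^ 2 + x.2.2 ^ 2 = 3 * x.1 * x.2.1 * x.2.2) :
    Relation.ReflTransGen MarkoffMove x (1, 1, 1) := by
  obtain ⟨a, b, c⟩ := x
  obtain ⟨ha, hb, hc⟩ := hpos
  simp only at ha hb hc h
  have hkey : ∀ p q r : ℤ, p + q + r = a + b + c → 0 < p → p ≤ q → q ≤ r →
      p ^ 2 + q ^ 2 + r ^ 2 = 3 * p * q * r →
      Relation.ReflTransGen MarkoffMove (p, q, r) (1, 1, 1) := by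
    intro p q r hpqr hp hpq hqr heq
    exact markoff_key_s15 (a + b + c).toNat p q r
      (by rw [Int.toNat_of_nonneg (by linarith)]; linarith) hp hpq hqr heq
  rcases le_total a b with hab | hab <;> rcases le_total b c with hbc | hbc <;>
    rcases le_total a c with hac | hac
  · exact hkey a b c rfl ha hab hbc h
  · exact hkey a b c rfl ha hab hbc h
  · exact Relation.ReflTransGen.head (Or.inr (Or.inr (Or.inr (Or.inl rfl))))
      (hkey a c b (by ring) ha hac hbc (by linear_combination h))
  · exact Relation.ReflTransGen.head (Or.inr (Or.inr (Or.inr (Or.inr (Or.inr (Or.inr (Or.inl rfl)))))))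
      (hkey c a b (by ring) hc hac hab (by linear_combination h))
  · exact Relation.ReflTransGen.head (Or.inr (Or.inr (Or.inr (Or.inr (Or.inl rfl)))))
      (hkey b a c (by ring) hb hab hac (by linear_combination h))
  · exact Relation.ReflTransGen.head (Or.inr (Or.inr (Or.inr (Or.inr (Or.inr (Or.inl rfl))))))
      (hkey b c a (by ring) hb hbc hac (by linear_combination h))
  · exact Relation.ReflTransGen.head (Or.inr (Or.inr (Or.inr (Or.inr (Or.inr (Or.inr (Or.inr rfl)))))))
      (hkey c b a (by ring) hc hbc hab (by linear_combination h))
  · exact Relation.ReflTransGen.head (Or.inr (Or.inr (Or.inr (Or.inr (Or.inr (Or.inr (Or.inr rfl)))))))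
      (hkey c b a (by ring) hc hbc hab (by linear_combination h))
end

section
/- Every odd Markoff number is congruent to 1 modulo 4. -/
theorem markoff_core (n : ℕ)
  (IH : ∀ m, m < n → ∀ a b c : ℤ, 0 < a → 0 < b → 0 < c →
      a^2+b^2+c^2 = 3*a*b*c → (a+b+c).toNat = m →
      IsCoprime a b ∧ IsCoprime a c ∧ IsCoprime b c)
  (a b c : ℤ) (ha : 0 < a) (hb : 0 < b) (hc : 0 < c)
  (hab : a ≤ b) (hbc : b ≤ c)
  (heq : a^2+b^2+c^2 = 3*a*b*c) (hn : (a+b+c).toNat = n) :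
  IsCoprime a b ∧ IsCoprime a c ∧ IsCoprime b c := by
  set c' : ℤ := 3*a*b - c with hc'def
  have hcc' : c * c' = a^2 + b^2 := by rw [hc'def]; ring_nf; nlinarith [heq]
  have hc'pos : 0 < c' := by nlinarith
  rcases lt_or_ge c' c with hlt | hge
  · have heq' : a^2+b^2+c'^2 = 3*a*b*c' := by rw [hc'def]; ring_nf; nlinarith [heq]
    have hm : (a+b+c').toNat < n := by omega
    obtain ⟨h1, h2, h3⟩ := IH _ hm a b c' ha hb hc'pos heq' rfl
    refine ⟨h1, ?_, ?_⟩
    · have : IsCoprime a (-c' + a * (3*b)) := (h2.neg_right).add_mul_left_right _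
      have hcc : c = -c' + a * (3*b) := by rw [hc'def]; ring
      rwa [← hcc] at this
    · have : IsCoprime b (-c' + b * (3*a)) := (h3.neg_right).add_mul_left_right _
      have hcc : c = -c' + b * (3*a) := by rw [hc'def]; ring
      rwa [← hcc] at this
  · have ha1 : a = 1 := by nlinarith
    have hcb : c = b := by nlinarith
    have hb1 : b = 1 := by nlinarith
    subst ha1; subst hcb; subst hb1
    exact ⟨isCoprime_one_left, isCoprime_one_left, isCoprime_one_left⟩

theorem markoff_pairwise_coprime : ∀ n : ℕ, ∀ a b c : ℤ, 0 < a → 0 < b → 0 < c →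
    a^2+b^2+c^2 = 3*a*b*c → (a+b+c).toNat = n →
    IsCoprime a b ∧ IsCoprime a c ∧ IsCoprime b c := by
  intro n
  induction n using Nat.strong_induction_on with
  | _ n IH =>
    intro a b c ha hb hc heq hn
    rcases le_total a b with h1 | h1 <;> rcases le_total b c with h2 | h2 <;>
      rcases le_total a c with h3 | h3
    case inl.inl.inl =>
      exact markoff_core n IH a b c ha hb hc h1 h2 (by linarith [heq]) (by omega)
    case inl.inl.inr =>
      exact markoff_core n IH a b c ha hb hc h1 h2 (by linarith [heq]) (by omega)
    case inl.inr.inl =>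
      obtain ⟨p, q, r⟩ := markoff_core n IH a c b ha hc hb h3 h2 (by linarith [heq]) (by omega)
      exact ⟨q, p, r.symm⟩
    case inl.inr.inr =>
      obtain ⟨p, q, r⟩ := markoff_core n IH c a b hc ha hb h3 h1 (by linarith [heq]) (by omega)
      exact ⟨r, p.symm, q.symm⟩
    case inr.inl.inl =>
      obtain ⟨p, q, r⟩ := markoff_core n IH b a c hb ha hc h1 h3 (by linarith [heq]) (by omega)
      exact ⟨p.symm, r, q⟩
    case inr.inl.inr =>
      obtain ⟨p, q, r⟩ := markoff_core n IH b c a hb hc ha h2 h3 (by linarith [heq]) (by omega)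
      exact ⟨q.symm, r.symm, p⟩
    case inr.inr.inl =>
      obtain ⟨p, q, r⟩ := markoff_core n IH c b a hc hb ha h2 h1 (by linarith [heq]) (by omega)
      exact ⟨r.symm, q.symm, p.symm⟩
    case inr.inr.inr =>
      obtain ⟨p, q, r⟩ := markoff_core n IH c b a hc hb ha h2 h1 (by linarith [heq]) (by omega)
      exact ⟨r.symm, q.symm, p.symm⟩

theorem prime_dvd_coprime_sq_add_sq (p : ℕ) (hp : p.Prime) (hodd : p % 2 = 1)
    (u v : ℤ) (huv : IsCoprime u v) (hdvd : (p : ℤ) ∣ u^2 + v^2) : p % 4 = 1 := by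
  haveI : Fact p.Prime := ⟨hp⟩
  have hpZ : Prime (p : ℤ) := Nat.prime_iff_prime_int.mp hp
  have hu : (u : ZMod p) ≠ 0 := by
    intro h
    have hpu : (p : ℤ) ∣ u := (ZMod.intCast_zmod_eq_zero_iff_dvd u p).mp h
    have hpu2 : (p : ℤ) ∣ u^2 := dvd_pow hpu two_ne_zero
    have hpv2 : (p : ℤ) ∣ v^2 := (dvd_add_right hpu2).mp hdvd
    have hpv : (p : ℤ) ∣ v := hpZ.dvd_of_dvd_pow hpv2
    exact hpZ.not_unit (huv.isUnit_of_dvd' hpu hpv)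
  have h0 : ((u : ZMod p))^2 + (v : ZMod p)^2 = 0 := by
    have := (ZMod.intCast_zmod_eq_zero_iff_dvd (u^2+v^2) p).mpr hdvd
    push_cast at this
    exact this
  have hsq : IsSquare (-1 : ZMod p) := by
    refine ⟨(v : ZMod p) * ((u : ZMod p))⁻¹, ?_⟩
    field_simp
    linear_combination -h0
  have h4 := (ZMod.exists_sq_eq_neg_one_iff (p := p)).mp hsq
  omega

theorem odd_all_factors_one_mod_four (n : ℕ) (hodd : n % 2 = 1)
    (hfac : ∀ p : ℕ, p.Prime → p ∣ n → p % 4 = 1) : n % 4 = 1 := by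
  induction n using Nat.strong_induction_on with
  | _ n IH =>
    rcases eq_or_ne n 1 with rfl | h1
    · rfl
    · obtain ⟨p, hp, hpd⟩ := Nat.exists_prime_and_dvd h1
      obtain ⟨k, rfl⟩ := hpd
      have hp2 := hp.two_le
      have hk : k % 2 = 1 := by
        rcases Nat.even_or_odd k with he | ho
        · obtain ⟨t, rfl⟩ := he
          have : p * (t + t) = 2 * (p * t) := by ring
          omega
        · exact Nat.odd_iff.mp ho
      have hkpos : 0 < k := by omega
      have hklt : k < p * k := by
        have := (Nat.mul_lt_mul_right hkpos).mpr (show 1 < p by omega)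
        omega
      have hk4 : k % 4 = 1 := IH k hklt hk (fun q hq hqd => hfac q hq (hqd.mul_left p))
      have hp4 : p % 4 = 1 := hfac p hp ⟨k, rfl⟩
      rw [Nat.mul_mod, hp4, hk4]


theorem pos_odd_dvd_coprime_sq_add_sq_mod_four (m u v : ℤ) (hmpos : 0 < m)
    (hodd : Odd m) (huv : IsCoprime u v) (hdvd : m ∣ u^2 + v^2) : m % 4 = 1 := by
  obtain ⟨t, ht⟩ := hodd
  set n : ℕ := m.toNat with hn
  have hmn : m = (n : ℤ) := by omega
  have hn2 : n % 2 = 1 := by omega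
  have hn4 : n % 4 = 1 := by
    apply odd_all_factors_one_mod_four n hn2
    intro p hp hpn
    have hp2 : p % 2 = 1 := by
      rcases Nat.even_or_odd p with he | ho
      · exfalso
        have hp2' : p = 2 := (Nat.Prime.even_iff hp).mp he
        subst hp2'
        obtain ⟨s, hs⟩ := hpn
        omega
      · exact Nat.odd_iff.mp ho
    apply prime_dvd_coprime_sq_add_sq p hp hp2 u v huv
    exact dvd_trans (by exact_mod_cast hmn ▸ Int.natCast_dvd_natCast.mpr hpn) hdvd
  omega

theorem odd_markoff_number_one_mod_four (m : ℤ) (hm : IsMarkoffNumber m)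
    (hodd : Odd m) : m % 4 = 1 := by
  obtain ⟨x₁, x₂, x₃, h1, h2, h3, heq, hcase⟩ := hm
  obtain ⟨hab, hac, hbc⟩ := markoff_pairwise_coprime (x₁+x₂+x₃).toNat x₁ x₂ x₃ h1 h2 h3
    (by linarith [heq]) rfl
  rcases hcase with rfl | rfl | rfl
  · exact pos_odd_dvd_coprime_sq_add_sq_mod_four _ x₂ x₃ h1 hodd hbc
      ⟨3*x₂*x₃ - m, by linear_combination heq⟩
  · exact pos_odd_dvd_coprime_sq_add_sq_mod_four _ x₁ x₃ h2 hodd hac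
      ⟨3*x₁*x₃ - m, by linear_combination heq⟩
  · exact pos_odd_dvd_coprime_sq_add_sq_mod_four _ x₁ x₂ h3 hodd hab
      ⟨3*x₁*x₂ - m, by linear_combination heq⟩
end
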